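/- Let φ : ℝ → ℝ be twice continuously differentiable with sup_x φ''(x) − inf_x φ''(x) ≤ B, and let β > 0, μ0 ∈ ℝ, δr ∈ ℝ satisfy β + φ''(μ0) − B > 0. Then the hybrid distribution h is a well-defined probability measure with finite variance, and its variance satisfies v_h ≤ (β + φ''(μ0) − B)⁻¹. -/

import Mathlib

open MeasureTheory Real Filter
open scoped ENNReal NNReal

noncomputable section

/-- Unnormalized density of the hybrid distribution:
`l(x) · exp(−(β/2)x² + (β μ0 − δr)x)` with `l = exp (−φ)`. -/
def hybridDens (φ : ℝ → ℝ) (β μ0 δr : ℝ) (x : ℝ) : ℝ :=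
  Real.exp (-(φ x) - β / 2 * x ^ 2 + (β * μ0 - δr) * x)

/-- The hybrid distribution: the normalized measure with density
proportional to `hybridDens`. -/
def hybrid (φ : ℝ → ℝ) (β μ0 δr : ℝ) : Measure ℝ :=
  ((volume.withDensity fun x => ENNReal.ofReal (hybridDens φ β μ0 δr x)) Set.univ)⁻¹ •
    (volume.withDensity fun x => ENNReal.ofReal (hybridDens φ β μ0 δr x))

/-- Mean of the hybrid distribution. -/
def hybridMean (φ : ℝ → ℝ) (β μ0 δr : ℝ) : ℝ :=
  ∫ x, x ∂(hybrid φ β μ0 δr)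

/-- Variance of the hybrid distribution. -/
def hybridVar (φ : ℝ → ℝ) (β μ0 δr : ℝ) : ℝ :=
  ∫ x, (x - hybridMean φ β μ0 δr) ^ 2 ∂(hybrid φ β μ0 δr)

section auxlemmas
variable {V Vd Vdd : ℝ → ℝ} {k : ℝ}

/-- Strong monotonicity of the derivative: `(x-a)*(Vd x - Vd a) ≥ k*(x-a)^2`. -/
lemma hyb_factA (hVd : ∀ x, HasDerivAt Vd (Vdd x) x) (hk : ∀ x, k ≤ Vdd x)
    (a x : ℝ) : k * (x - a) ^ 2 ≤ (x - a) * (Vd x - Vd a) := by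
  have mono : Monotone fun x => Vd x - k * x := by
    have hu : ∀ x, HasDerivAt (fun x => Vd x - k * x) (Vdd x - k) x := fun x =>
      (hVd x).sub ((hasDerivAt_id x).const_mul k |>.congr_deriv (by ring))
    refine monotone_of_deriv_nonneg (fun x => (hu x).differentiableAt) fun x => ?_
    rw [(hu x).deriv]; linarith [hk x]
  rcases le_total a x with h | h
  · have := mono h; simp only [] at this; nlinarith
  · have := mono h; simp only [] at this; nlinarith

/-- Quadratic lower bound from strong convexity. -/
lemma hyb_factB (hV : ∀ x, HasDerivAt V (Vd x) x) (hVd : ∀ x, HasDerivAt Vd (Vdd x) x)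
    (hk : ∀ x, k ≤ Vdd x) (x : ℝ) :
    V 0 + Vd 0 * x + k / 2 * x ^ 2 ≤ V x := by
  set F : ℝ → ℝ := fun y => V y - Vd 0 * y - k / 2 * y ^ 2 with hFdef
  have hF : ∀ y, HasDerivAt F (Vd y - Vd 0 - k * y) y := by
    intro y
    have h1 : HasDerivAt (fun y : ℝ => Vd 0 * y) (Vd 0) y := by
      simpa using (hasDerivAt_id y).const_mul (Vd 0)
    have h2 : HasDerivAt (fun y : ℝ => k / 2 * y ^ 2) (k * y) y := by
      have := (hasDerivAt_pow 2 y).const_mul (k / 2)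
      exact this.congr_deriv (by push_cast; ring)
    exact ((hV y).sub h1).sub h2
  have key : ∀ y, F 0 ≤ F y := by
    intro y
    rcases lt_trichotomy y 0 with hy | hy | hy
    · obtain ⟨c, hc, hc2⟩ := exists_hasDerivAt_eq_slope F _ hy
        (fun z _ => (hF z).continuousAt.continuousWithinAt) (fun z hz => hF z)
      have hc' : Vd c - Vd 0 - k * c ≤ 0 := by
        have := hyb_factA hVd hk 0 c
        nlinarith [hc.2, sq_nonneg c]
      have : (F 0 - F y) / (0 - y) ≤ 0 := hc2 ▸ hc'
      have h0y : (0:ℝ) < 0 - y := by linarith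
      rw [div_le_iff₀ h0y] at this; linarith
    · simp [hy]
    · obtain ⟨c, hc, hc2⟩ := exists_hasDerivAt_eq_slope F _ hy
        (fun z _ => (hF z).continuousAt.continuousWithinAt) (fun z hz => hF z)
      have hc' : 0 ≤ Vd c - Vd 0 - k * c := by
        have := hyb_factA hVd hk 0 c
        nlinarith [hc.1, sq_nonneg c]
      have : 0 ≤ (F y - F 0) / (y - 0) := hc2 ▸ hc'
      have h0y : (0:ℝ) < y - 0 := by linarith
      rw [le_div_iff₀ h0y] at this; linarith
  have := key x
  simp only [hFdef] at this
  nlinarith [this]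

/-- Master integrability lemma: anything with at most exponential growth times
`exp (-V)` is integrable when `V` has a quadratic lower bound. -/
lemma hyb_masterInt (hVc : Continuous V) {c0 c1 : ℝ} (hkpos : 0 < k)
    (hlow : ∀ x, -V x ≤ c0 + c1 * x - k / 2 * x ^ 2)
    {f : ℝ → ℝ} (hfc : Continuous f) {A : ℝ} (hA : ∀ x, |f x| ≤ A * Real.exp |x|) :
    Integrable (fun x => f x * Real.exp (-V x)) := by
  have hA0 : 0 ≤ A := by have := hA 0; simp at this; linarith [abs_nonneg (f 0)]
  set c := c0 + (1 + |c1|) ^ 2 / k with hc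
  apply Integrable.mono'
    (((integrable_exp_neg_mul_sq (show (0:ℝ) < k/4 by linarith)).const_mul
      (Real.exp c)).const_mul A)
  · exact (hfc.mul (hVc.neg.rexp)).aestronglyMeasurable
  · filter_upwards with x
    have h1 := hlow x
    have h2 : c1 * x ≤ |c1| * |x| := by rw [← abs_mul]; exact le_abs_self _
    have hsq : (0:ℝ) ≤ k^2*x^2 - 4*k*(1+|c1|)*|x| + 4*(1+|c1|)^2 := by
      have h := sq_nonneg (k*|x| - 2*(1+|c1|))
      have e : (k*|x| - 2*(1+|c1|))^2 = k^2*x^2 - 4*k*(1+|c1|)*|x| + 4*(1+|c1|)^2 := by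
        rw [← sq_abs x]; ring
      linarith [e ▸ h]
    have h3 : ((1 + |c1|) * |x| - k/4 * x^2) * k ≤ (1 + |c1|)^2 := by linarith
    have h3' : (1 + |c1|) * |x| - k/4 * x^2 ≤ (1 + |c1|)^2 / k :=
      (le_div_iff₀ hkpos).mpr h3
    have hexp : |x| + -V x ≤ c + -(k/4 * x ^ 2) := by
      rw [hc]; nlinarith [sq_abs x, abs_nonneg x]
    calc ‖f x * Real.exp (-V x)‖ = |f x| * Real.exp (-V x) := by
          rw [norm_mul, Real.norm_eq_abs, Real.norm_eq_abs, abs_of_pos (Real.exp_pos _)]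
      _ ≤ (A * Real.exp |x|) * Real.exp (-V x) :=
          mul_le_mul_of_nonneg_right (hA x) (Real.exp_pos _).le
      _ = A * Real.exp (|x| + -V x) := by rw [Real.exp_add]; ring
      _ ≤ A * Real.exp (c + -(k/4 * x^2)) :=
          mul_le_mul_of_nonneg_left (Real.exp_le_exp.mpr hexp) hA0
      _ = A * (Real.exp c * Real.exp (-(k/4) * x ^ 2)) := by
          rw [Real.exp_add]; ring_nf

end auxlemmas

section convlemmas
variable {d : ℝ → ℝ}

lemma hyb_conv_integral (hd : Continuous d) (hpos : ∀ x, 0 < d x) (f : ℝ → ℝ) :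
    ∫ x, f x ∂(volume.withDensity fun x => ENNReal.ofReal (d x)) = ∫ x, f x * d x := by
  have hm : Measurable fun x => (d x).toNNReal := hd.measurable.real_toNNReal
  rw [show (fun x => ENNReal.ofReal (d x)) = (fun x => ((d x).toNNReal : ℝ≥0∞)) from rfl,
    integral_withDensity_eq_integral_smul hm]
  congr 1; funext x
  simp [NNReal.smul_def, Real.coe_toNNReal _ (hpos x).le, mul_comm]

lemma hyb_conv_integrable (hd : Continuous d) (hpos : ∀ x, 0 < d x) {f : ℝ → ℝ}
    (hf : Integrable (fun x => f x * d x)) :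
    Integrable f (volume.withDensity fun x => ENNReal.ofReal (d x)) := by
  have hm : Measurable fun x => (d x).toNNReal := hd.measurable.real_toNNReal
  rw [show (fun x => ENNReal.ofReal (d x)) = (fun x => ((d x).toNNReal : ℝ≥0∞)) from rfl]
  refine (integrable_withDensity_iff_integrable_smul (E := ℝ) hm (g := f)).mpr ?_
  apply hf.congr
  filter_upwards with x
  simp [NNReal.smul_def, Real.coe_toNNReal _ (hpos x).le, mul_comm]

lemma hyb_conv_univ (hpos : ∀ x, 0 < d x) (hint : Integrable d) :
    (volume.withDensity fun x => ENNReal.ofReal (d x)) Set.univ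
      = ENNReal.ofReal (∫ x, d x) := by
  rw [withDensity_apply _ MeasurableSet.univ, Measure.restrict_univ,
    ← ofReal_integral_eq_lintegral_ofReal hint (Filter.Eventually.of_forall fun x => (hpos x).le)]

end convlemmas

set_option maxHeartbeats 2000000 in
/-- coarse Brascamp–Lieb variance bound for the hybrid.  If `φ` is C²
with `sup φ'' − inf φ'' ≤ B` and `β + φ''(μ0) − B > 0`, then the hybrid is a
well-defined probability measure with finite variance, and
`v_h ≤ (β + φ''(μ0) − B)⁻¹`. -/
theorem hybrid_variance_coarse_bound
    (φ : ℝ → ℝ) (B : ℝ) (hφ : ContDiff ℝ 2 φ)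
    (hB : ∀ x y, iteratedDeriv 2 φ x - iteratedDeriv 2 φ y ≤ B)
    (β μ0 δr : ℝ) (hβ : 0 < β)
    (hpos : 0 < β + iteratedDeriv 2 φ μ0 - B) :
    IsProbabilityMeasure (hybrid φ β μ0 δr) ∧
    Integrable (fun x => x) (hybrid φ β μ0 δr) ∧
    Integrable (fun x => x ^ 2) (hybrid φ β μ0 δr) ∧
    hybridVar φ β μ0 δr ≤ (β + iteratedDeriv 2 φ μ0 - B)⁻¹ := by
  -- basic smoothness facts
  have hφ1 : ContDiff ℝ 1 (deriv φ) := by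
    have h := (contDiff_succ_iff_deriv (n := 1)).mp (by norm_num at hφ ⊢; exact hφ)
    exact h.2.2
  have hdφ : Differentiable ℝ φ := hφ.differentiable (by norm_num)
  have hdφ' : Differentiable ℝ (deriv φ) := hφ1.differentiable one_ne_zero
  have hit2 : iteratedDeriv 2 φ = deriv (deriv φ) := by
    rw [iteratedDeriv_succ, iteratedDeriv_one]
  have hφ2 : ∀ x, HasDerivAt (deriv φ) (iteratedDeriv 2 φ x) x := by
    intro x; rw [hit2]; exact (hdφ' x).hasDerivAt
  -- the potential and its derivatives
  set k := β + iteratedDeriv 2 φ μ0 - B with hkdef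
  set K := β + iteratedDeriv 2 φ μ0 + B with hKdef
  set V : ℝ → ℝ := fun x => φ x + β / 2 * x ^ 2 - (β * μ0 - δr) * x with hVdef
  set Vd : ℝ → ℝ := fun x => deriv φ x + β * x - (β * μ0 - δr) with hVddef
  set Vdd : ℝ → ℝ := fun x => iteratedDeriv 2 φ x + β with hVdddef
  have hVderiv : ∀ x, HasDerivAt V (Vd x) x := by
    intro x
    have h2 : HasDerivAt (fun x : ℝ => β / 2 * x ^ 2) (β * x) x := by
      have := (hasDerivAt_pow 2 x).const_mul (β / 2)
      exact this.congr_deriv (by push_cast; ring)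
    have h3 : HasDerivAt (fun x : ℝ => (β * μ0 - δr) * x) (β * μ0 - δr) x := by
      simpa using (hasDerivAt_id x).const_mul (β * μ0 - δr)
    exact ((hdφ x).hasDerivAt.add h2).sub h3
  have hVdderiv : ∀ x, HasDerivAt Vd (Vdd x) x := by
    intro x
    have h2 : HasDerivAt (fun x : ℝ => β * x) β x := by
      simpa using (hasDerivAt_id x).const_mul β
    exact ((hφ2 x).add h2).sub_const _
  have hVcont : Continuous V := by
    apply (hφ.continuous.add (continuous_const.mul (continuous_pow 2))).sub
    exact continuous_const.mul continuous_id
  have hVdcont : Continuous Vd := by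
    apply (hφ1.continuous.add (continuous_const.mul continuous_id)).sub continuous_const
  have hk_le : ∀ x, k ≤ Vdd x := by
    intro x; have := hB μ0 x; simp only [hVdddef, hkdef]; linarith
  have hK_ge : ∀ x, Vdd x ≤ K := by
    intro x; have := hB x μ0; simp only [hVdddef, hKdef]; linarith
  have hkpos : 0 < k := hpos
  have hKpos : 0 < K := lt_of_lt_of_le hkpos (le_trans (hk_le 0) (hK_ge 0))
  -- the density
  set d : ℝ → ℝ := fun x => Real.exp (-V x) with hddef
  have hdens : hybridDens φ β μ0 δr = d := by
    funext x; simp only [hybridDens, hddef, hVdef]; congr 1; ring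
  have hdcont : Continuous d := hVcont.neg.rexp
  have hdpos : ∀ x, 0 < d x := fun x => Real.exp_pos _
  -- quadratic lower bound on V
  have hlow : ∀ x, -V x ≤ (-V 0) + (-Vd 0) * x - k / 2 * x ^ 2 := by
    intro x
    have := hyb_factB hVderiv hVdderiv hk_le x
    linarith
  -- growth bound on Vd
  have hVd_growth : ∀ x, |Vd x| ≤ |Vd 0| + K * |x| := by
    have mono1 : Monotone fun x => Vd x - k * x := by
      have hu : ∀ x, HasDerivAt (fun x => Vd x - k * x) (Vdd x - k) x := fun x =>
        (hVdderiv x).sub ((hasDerivAt_id x).const_mul k |>.congr_deriv (by ring))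
      refine monotone_of_deriv_nonneg (fun x => (hu x).differentiableAt) fun x => ?_
      rw [(hu x).deriv]; linarith [hk_le x]
    have mono2 : Monotone fun x => K * x - Vd x := by
      have hu : ∀ x, HasDerivAt (fun x => K * x - Vd x) (K - Vdd x) x := fun x =>
        ((hasDerivAt_id x).const_mul K |>.congr_deriv (by ring)).sub (hVdderiv x)
      refine monotone_of_deriv_nonneg (fun x => (hu x).differentiableAt) fun x => ?_
      rw [(hu x).deriv]; linarith [hK_ge x]
    intro x
    rcases le_total 0 x with hx | hx
    · have h1 := mono1 hx; have h2 := mono2 hx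
      simp only [] at h1 h2
      rw [abs_of_nonneg hx]
      rw [abs_le]
      constructor
      · have := neg_abs_le (Vd 0); nlinarith [mul_nonneg hkpos.le hx, mul_nonneg hKpos.le hx]
      · have := le_abs_self (Vd 0); nlinarith
    · have h1 := mono1 hx; have h2 := mono2 hx
      simp only [] at h1 h2
      rw [abs_of_nonpos hx]
      rw [abs_le]
      constructor
      · have := neg_abs_le (Vd 0)
        nlinarith [mul_nonneg hkpos.le (neg_nonneg.mpr hx), mul_nonneg hKpos.le (neg_nonneg.mpr hx)]
      · have := le_abs_self (Vd 0); nlinarith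
  -- exponential-growth bounds
  have hExp1 : ∀ x : ℝ, |x| ≤ Real.exp |x| := fun x => by
    linarith [Real.add_one_le_exp |x|]
  have hExp0 : ∀ x : ℝ, (1:ℝ) ≤ Real.exp |x| := fun x =>
    Real.one_le_exp (abs_nonneg x)
  have hExp2 : ∀ x : ℝ, x ^ 2 ≤ 4 * Real.exp |x| := by
    intro x
    have h := Real.add_one_le_exp (|x| / 2)
    have h2 : (|x|/2 + 1) ^ 2 ≤ (Real.exp (|x|/2)) ^ 2 := by
      apply pow_le_pow_left₀ (by positivity) (by linarith)
    have h3 : (Real.exp (|x|/2)) ^ 2 = Real.exp |x| := by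
      rw [sq, ← Real.exp_add]; congr 1; ring
    nlinarith [sq_abs x, abs_nonneg x]
  -- integrability toolkit
  have master : ∀ {f : ℝ → ℝ}, Continuous f → ∀ {A : ℝ}, (∀ x, |f x| ≤ A * Real.exp |x|) →
      Integrable (fun x => f x * d x) := by
    intro f hfc A hA
    exact hyb_masterInt hVcont hkpos hlow hfc hA
  have I_one : Integrable d := by
    have := master (f := fun _ => (1:ℝ)) continuous_const (A := 1)
      (fun x => by simpa using hExp0 x)
    simpa using this
  have I_id : Integrable (fun x => x * d x) :=
    master continuous_id (A := 1) (fun x => by simpa using hExp1 x)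
  have I_sq : Integrable (fun x => x ^ 2 * d x) :=
    master (continuous_pow 2) (A := 4) (fun x => by
      rw [abs_of_nonneg (sq_nonneg x)]; exact hExp2 x)
  -- normalization constant
  set Z := ∫ x, d x with hZdef
  have hZpos : 0 < Z := by
    rw [hZdef]
    refine (integral_pos_iff_support_of_nonneg (fun x => (hdpos x).le) I_one).mpr ?_
    have hsupp : Function.support d = Set.univ :=
      Set.eq_univ_of_forall fun x => (hdpos x).ne'
    rw [hsupp, Real.volume_univ]
    simp
  set ν := volume.withDensity fun x => ENNReal.ofReal (d x) with hνdef
  have hν_univ : ν Set.univ = ENNReal.ofReal Z := hyb_conv_univ hdpos I_one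
  have hyb_eq : hybrid φ β μ0 δr = (ENNReal.ofReal Z)⁻¹ • ν := by
    rw [hybrid, hdens, ← hνdef, hν_univ]
  have hZne0 : ENNReal.ofReal Z ≠ 0 := (ENNReal.ofReal_pos.mpr hZpos).ne'
  have hZnetop : ENNReal.ofReal Z ≠ ⊤ := ENNReal.ofReal_ne_top
  have hprob : IsProbabilityMeasure (hybrid φ β μ0 δr) := by
    constructor
    rw [hyb_eq, Measure.smul_apply, hν_univ, smul_eq_mul,
      ENNReal.inv_mul_cancel hZne0 hZnetop]
  have hint_eq : ∀ f : ℝ → ℝ,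
      ∫ x, f x ∂(hybrid φ β μ0 δr) = Z⁻¹ * ∫ x, f x * d x := by
    intro f
    rw [hyb_eq, integral_smul_measure, hyb_conv_integral hdcont hdpos f,
      ENNReal.toReal_inv, ENNReal.toReal_ofReal hZpos.le, smul_eq_mul]
  have hIconv : ∀ {f : ℝ → ℝ}, Integrable (fun x => f x * d x) →
      Integrable f (hybrid φ β μ0 δr) := by
    intro f hf
    rw [hyb_eq]
    exact (integrable_smul_measure (ENNReal.inv_ne_zero.mpr hZnetop)
      (ENNReal.inv_ne_top.mpr hZne0)).mpr (hyb_conv_integrable hdcont hdpos hf)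
  -- the mean
  set m := hybridMean φ β μ0 δr with hmdef
  have hm_eq : m = Z⁻¹ * ∫ x, x * d x := by
    rw [hmdef, hybridMean]; exact hint_eq fun x => x
  have hm_int : ∫ x, x * d x = Z * m := by
    rw [hm_eq, ← mul_assoc, mul_inv_cancel₀ hZpos.ne', one_mul]
  have I_xm : Integrable (fun x => (x - m) * d x) := by
    apply (I_id.sub (I_one.const_mul m)).congr
    filter_upwards with x; try simp only [Pi.sub_apply, Pi.add_apply]
    ring
  have hzero : ∫ x, (x - m) * d x = 0 := by
    have h : ∫ x, (x - m) * d x = (∫ x, x * d x) - ∫ x, m * d x := by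
      rw [← integral_sub I_id (I_one.const_mul m)]; congr 1; funext x; ring
    rw [h, integral_const_mul, hm_int, ← hZdef]; ring
  -- integration by parts
  have hder_exp : ∀ x, HasDerivAt d (d x * (-Vd x)) x := fun x => ((hVderiv x).neg).exp
  have hg : ∀ x, HasDerivAt (fun x => (x - m) * d x) ((1 - (x - m) * Vd x) * d x) x := by
    intro x
    have h := ((hasDerivAt_id x).sub_const m).mul (hder_exp x)
    exact h.congr_deriv (by simp only [id]; ring)
  have habs2 : ∀ x : ℝ, |x - m| ≤ |x| + |m| := fun x => abs_sub x m
  have I_g' : Integrable (fun x => (1 - (x - m) * Vd x) * d x) := by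
    refine master (continuous_const.sub ((continuous_id.sub continuous_const).mul hVdcont))
      (A := 1 + |Vd 0| + 4 * K + |m| * |Vd 0| + |m| * K) fun x => ?_
    have t1 : |1 - (x - m) * Vd x| ≤ 1 + |x - m| * |Vd x| := by
      calc |1 - (x - m) * Vd x| ≤ |(1:ℝ)| + |(x - m) * Vd x| := abs_sub _ _
        _ = 1 + |x - m| * |Vd x| := by rw [abs_one, abs_mul]
    have prod : |x - m| * |Vd x| ≤ (|x| + |m|) * (|Vd 0| + K * |x|) :=
      mul_le_mul (habs2 x) (hVd_growth x) (abs_nonneg _) (by positivity)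
    have e0 := hExp0 x; have e1 := hExp1 x; have e2 := hExp2 x
    have a1 : |Vd 0| * |x| ≤ |Vd 0| * Real.exp |x| :=
      mul_le_mul_of_nonneg_left e1 (abs_nonneg _)
    have a2 : K * (|x| * |x|) ≤ K * (4 * Real.exp |x|) := by
      rw [← sq_abs x] at e2
      exact mul_le_mul_of_nonneg_left (by nlinarith [e2]) hKpos.le
    have a3 : |m| * |Vd 0| ≤ |m| * |Vd 0| * Real.exp |x| := by
      nlinarith [mul_nonneg (abs_nonneg m) (abs_nonneg (Vd 0)), e0]
    have a4 : |m| * K * |x| ≤ |m| * K * Real.exp |x| :=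
      mul_le_mul_of_nonneg_left e1 (by positivity)
    have prod' : |x - m| * |Vd x|
        ≤ |Vd 0| * |x| + K * (|x| * |x|) + |m| * |Vd 0| + |m| * K * |x| :=
      le_of_le_of_eq prod (by ring)
    have goal_eq : (1 + |Vd 0| + 4 * K + |m| * |Vd 0| + |m| * K) * Real.exp |x|
        = Real.exp |x| + |Vd 0| * Real.exp |x| + K * (4 * Real.exp |x|)
          + |m| * |Vd 0| * Real.exp |x| + |m| * K * Real.exp |x| := by ring
    rw [goal_eq]
    linarith [t1, prod', e0, a1, a2, a3, a4]
  have I_xmVd : Integrable (fun x => ((x - m) * Vd x) * d x) := by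
    apply (I_one.sub I_g').congr
    filter_upwards with x; try simp only [Pi.sub_apply, Pi.add_apply]
    ring
  have I_sqm : Integrable (fun x => (x - m) ^ 2 * d x) := by
    apply ((I_sq.sub (I_id.const_mul (2*m))).add (I_one.const_mul (m^2))).congr
    filter_upwards with x; try simp only [Pi.sub_apply, Pi.add_apply]
    ring
  have I_lhs : Integrable (fun x => (k * (x - m) ^ 2) * d x) := by
    apply (I_sqm.const_mul k).congr
    filter_upwards with x; try simp only [Pi.sub_apply, Pi.add_apply]
    ring
  have I_rhs : Integrable (fun x => ((x - m) * (Vd x - Vd m)) * d x) := by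
    apply (I_xmVd.sub (I_xm.const_mul (Vd m))).congr
    filter_upwards with x; try simp only [Pi.sub_apply, Pi.add_apply]
    ring
  have hIBP : ∫ x, (1 - (x - m) * Vd x) * d x = 0 :=
    integral_eq_zero_of_hasDerivAt_of_integrable hg I_g' I_xm
  have hpart : ∫ x, ((x - m) * Vd x) * d x = Z := by
    have h : ∫ x, (1 - (x - m) * Vd x) * d x
        = (∫ x, d x) - ∫ x, ((x - m) * Vd x) * d x := by
      rw [← integral_sub I_one I_xmVd]; congr 1; funext x; ring
    rw [hIBP, ← hZdef] at h; linarith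
  have htotal : ∫ x, ((x - m) * (Vd x - Vd m)) * d x = Z := by
    have h : ∫ x, ((x - m) * (Vd x - Vd m)) * d x
        = (∫ x, ((x - m) * Vd x) * d x) - ∫ x, Vd m * ((x - m) * d x) := by
      rw [← integral_sub I_xmVd (I_xm.const_mul (Vd m))]; congr 1; funext x; ring
    rw [h, integral_const_mul, hzero, hpart]; ring
  have hmono : ∫ x, (k * (x - m) ^ 2) * d x ≤ ∫ x, ((x - m) * (Vd x - Vd m)) * d x :=
    integral_mono I_lhs I_rhs fun x =>
      mul_le_mul_of_nonneg_right (hyb_factA hVdderiv hk_le m x) (hdpos x).le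
  set S := ∫ x, (x - m) ^ 2 * d x with hSdef
  have hkS : k * S ≤ Z := by
    have h : ∫ x, (k * (x - m) ^ 2) * d x = k * S := by
      rw [hSdef, ← integral_const_mul]; congr 1; funext x; ring
    rw [h, htotal] at hmono; exact hmono
  have hS0 : 0 ≤ S := integral_nonneg fun x => by positivity
  have hvar : hybridVar φ β μ0 δr = Z⁻¹ * S := by
    rw [hybridVar, ← hmdef]; exact hint_eq fun x => (x - m) ^ 2
  refine ⟨hprob, hIconv I_id, hIconv I_sq, ?_⟩
  rw [hvar]
  have hSZ : S ≤ Z / k := (le_div_iff₀ hkpos).mpr (by linarith [mul_comm k S])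
  calc Z⁻¹ * S ≤ Z⁻¹ * (Z / k) := by
        apply mul_le_mul_of_nonneg_left hSZ (by positivity)
    _ = k⁻¹ := by field_simp
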